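/- Let p be a real number of the form p = 2i/(2j+1) with i, j positive integers and p > 2. Then for every real number t, (p-1)·p^{p-2}·|t|^p + |t+1|^p - p·sgn(t+1)·|t+1|^{p-1}·t ≥ p^{p-2}·(p-1)^{1-p}. -/

import Mathlib

open Real Set

lemma aux_log (y : ℝ) (hy : 1 ≤ y) : Real.log y ≤ (y - y⁻¹) / 2 := by
  have mono : MonotoneOn (fun z : ℝ => (z - z⁻¹)/2 - Real.log z) (Ici 1) := by
    apply monotoneOn_of_deriv_nonneg (convex_Ici 1)
    · apply ContinuousOn.sub
      · apply ContinuousOn.div_const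
        exact (continuousOn_id.sub (continuousOn_inv₀.mono (by intro x hx; simp at hx ⊢; linarith)))
      · apply Real.continuousOn_log.mono
        intro x hx; simp at hx ⊢; linarith
    · intro x hx
      rw [interior_Ici] at hx
      have hx0 : x ≠ 0 := by have : (1:ℝ) < x := hx; positivity
      exact (((differentiable_id.differentiableAt.sub ((differentiableAt_inv hx0))).div_const 2).sub
        (Real.differentiableAt_log hx0)).differentiableWithinAt
    · intro x hx
      rw [interior_Ici] at hx
      have hx1 : (1:ℝ) < x := hx
      have hx0 : x ≠ 0 := by positivity
      have hd : HasDerivAt (fun z : ℝ => (z - z⁻¹)/2 - Real.log z)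
          ((1 - -(x^2)⁻¹)/2 - x⁻¹) x :=
        (((hasDerivAt_id x).sub (hasDerivAt_inv hx0)).div_const 2).sub (Real.hasDerivAt_log hx0)
      rw [hd.deriv]
      have h2 : (1 - -(x^2)⁻¹)/2 - x⁻¹ = (x-1)^2 / (2*x^2) := by
        field_simp
        ring
      rw [h2]
      positivity
  have := mono (self_mem_Ici) hy hy
  simp only [Real.log_one, inv_one] at this
  linarith

lemma aux_pow (r : ℝ) (hr : 1 ≤ r) : (r+2) ^ r ≤ (2*r+1) * r ^ r := by
  have key : ∀ z ∈ Ici (1:ℝ), (0:ℝ) ≤ Real.log (2*z+1) + z * Real.log z - z * Real.log (z+2) := by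
    have mono : MonotoneOn (fun z : ℝ => Real.log (2*z+1) + z * Real.log z - z * Real.log (z+2)) (Ici 1) := by
      apply monotoneOn_of_deriv_nonneg (convex_Ici 1)
      · apply ContinuousOn.sub
        apply ContinuousOn.add
        · exact ContinuousOn.log (by fun_prop) (fun x hx => by simp at hx; intro h; linarith)
        · exact continuousOn_id.mul (ContinuousOn.log continuousOn_id
            (fun x hx => by simp at hx; intro h; linarith))
        · exact continuousOn_id.mul (ContinuousOn.log (by fun_prop)
            (fun x hx => by simp at hx; intro h; linarith))
      · intro x hx
        rw [interior_Ici] at hx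
        have hx1 : (1:ℝ) < x := hx
        apply DifferentiableAt.differentiableWithinAt
        apply DifferentiableAt.sub
        apply DifferentiableAt.add
        · exact (Real.differentiableAt_log (by linarith)).comp x (by fun_prop)
        · exact differentiableAt_id.mul (Real.differentiableAt_log (by linarith))
        · exact differentiableAt_id.mul ((Real.differentiableAt_log (by linarith)).comp x (by fun_prop))
      · intro x hx
        rw [interior_Ici] at hx
        have hx1 : (1:ℝ) < x := hx
        have h1 : (2*x+1) ≠ 0 := by linarith
        have h2 : x ≠ 0 := by linarith
        have h3 : (x+2) ≠ 0 := by linarith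
        have d1 : HasDerivAt (fun z : ℝ => Real.log (2*z+1)) ((2*x+1)⁻¹ * 2) x := by
          have inner : HasDerivAt (fun z : ℝ => 2*z+1) 2 x := by
            simpa using ((hasDerivAt_id x).const_mul 2).add_const 1
          simpa [Function.comp_def] using (Real.hasDerivAt_log h1).comp x inner
        have d2 : HasDerivAt (fun z : ℝ => z * Real.log z) (1 * Real.log x + x * x⁻¹) x :=
          (hasDerivAt_id x).mul (Real.hasDerivAt_log h2)
        have d3 : HasDerivAt (fun z : ℝ => z * Real.log (z+2)) (1 * Real.log (x+2) + x * (x+2)⁻¹) x := by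
          have inner : HasDerivAt (fun z : ℝ => z+2) 1 x := by
            simpa using (hasDerivAt_id x).add_const 2
          exact (hasDerivAt_id x).mul (by simpa [Function.comp_def] using (Real.hasDerivAt_log h3).comp x inner)
        have hd := (d1.add d2).sub d3
        rw [(show HasDerivAt (fun z : ℝ => Real.log (2*z+1) + z * Real.log z - z * Real.log (z+2)) _ x from hd).deriv]
        have hlog := aux_log ((x+2)/x) (by rw [le_div_iff₀ (by linarith)]; linarith)
        rw [Real.log_div h3 h2] at hlog
        rw [inv_div] at hlog
        have expand : ((x+2)/x - x/(x+2))/2 = (2*x+2)/(x*(x+2)) := by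
          field_simp; ring
        rw [expand] at hlog
        have hsum : 2/(2*x+1) + 2/(x+2) = (6*x+6)/((2*x+1)*(x+2)) := by
          field_simp; ring
        have hcross : (2*x+2)/(x*(x+2)) ≤ (6*x+6)/((2*x+1)*(x+2)) := by
          rw [div_le_div_iff₀ (by positivity) (by positivity)]
          nlinarith [sq_nonneg x, hx1]
        have e1 : x * x⁻¹ = 1 := mul_inv_cancel₀ h2
        have e2 : x * (x+2)⁻¹ = 1 - 2/(x+2) := by field_simp; ring
        have e3 : (2*x+1)⁻¹ * 2 = 2/(2*x+1) := by ring
        rw [e1, e2, e3]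
        linarith
    intro z hz
    have := mono self_mem_Ici hz hz
    have h0 : Real.log (2*1+1) + 1 * Real.log 1 - 1 * Real.log (1+2) = 0 := by norm_num
    simp only at this
    rw [h0] at this
    exact this
  have hk := key r hr
  have hr0 : (0:ℝ) < r := by linarith
  have h2r : (0:ℝ) < 2*r+1 := by linarith
  have hrp2 : (0:ℝ) < r+2 := by linarith
  have hmul : Real.log (r+2) * r ≤ Real.log (2*r+1) + Real.log r * r := by nlinarith [hk]
  calc (r+2)^r = Real.exp (Real.log (r+2) * r) := Real.rpow_def_of_pos hrp2 r
    _ ≤ Real.exp (Real.log (2*r+1) + Real.log r * r) := Real.exp_le_exp.2 hmul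
    _ = (2*r+1) * r^r := by rw [Real.exp_add, Real.exp_log h2r, ← Real.rpow_def_of_pos hr0]

lemma hd_pow (q : ℝ) (hq : 1 ≤ q) (x : ℝ) : HasDerivAt (fun s : ℝ => s ^ q) (q * x^(q-1)) x :=
  Real.hasDerivAt_rpow_const (Or.inr hq)

lemma hd_pow_add1 (q : ℝ) (hq : 1 ≤ q) (x : ℝ) : HasDerivAt (fun s : ℝ => (s+1) ^ q) (q * (x+1)^(q-1)) x := by
  have h0 : HasDerivAt (fun s : ℝ => s+1) 1 x := by simpa using (hasDerivAt_id x).add_const 1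
  simpa [Function.comp_def] using (Real.hasDerivAt_rpow_const (x := x+1) (p := q) (Or.inr hq)).comp x h0

lemma hd_pow_sub1 (q : ℝ) (hq : 1 ≤ q) (x : ℝ) : HasDerivAt (fun s : ℝ => (s-1) ^ q) (q * (x-1)^(q-1)) x := by
  have h0 : HasDerivAt (fun s : ℝ => s-1) 1 x := by simpa using (hasDerivAt_id x).sub_const 1
  simpa [Function.comp_def] using (Real.hasDerivAt_rpow_const (x := x-1) (p := q) (Or.inr hq)).comp x h0

lemma hd_pow_one_sub (q : ℝ) (hq : 1 ≤ q) (x : ℝ) :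
    HasDerivAt (fun s : ℝ => (1-s) ^ q) (-(q * (1-x)^(q-1))) x := by
  have h0 : HasDerivAt (fun s : ℝ => 1-s) (-1) x := by simpa using (hasDerivAt_id x).const_sub 1
  simpa [Function.comp_def] using (Real.hasDerivAt_rpow_const (x := 1-x) (p := q) (Or.inr hq)).comp x h0

lemma caseA (p : ℝ) (hp2 : 2 < p) (t : ℝ) (ht : 0 ≤ t) :
    p^(p-2) * (p-1)^(1-p) ≤ (p-1)*p^(p-2)*t^p + (t+1)^p - p*(t+1)^(p-1)*t := by
  have hp1 : (1:ℝ) ≤ p := by linarith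
  have hp1' : (1:ℝ) ≤ p - 1 := by linarith
  have hr0 : (0:ℝ) < p - 1 := by linarith
  set c : ℝ := (p-1)⁻¹ with hcdef
  have hc0 : 0 < c := by positivity
  set F : ℝ → ℝ := fun s => (p-1)*p^(p-2)*s^p + (s+1)^p - p*((s+1)^(p-1)*s) with hFdef
  have hdF : ∀ x : ℝ, HasDerivAt F (p*(p-1)*(p^(p-2)*x^(p-1) - x*(x+1)^(p-2))) x := by
    intro x
    have h1 : HasDerivAt (fun s : ℝ => (p-1)*p^(p-2)*s^p) ((p-1)*p^(p-2)*(p*x^(p-1))) x :=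
      (hd_pow p hp1 x).const_mul _
    have h2 := hd_pow_add1 p hp1 x
    have h3 : HasDerivAt (fun s : ℝ => p*((s+1)^(p-1)*s))
        (p*((p-1) * (x+1)^(p-2) * x + (x+1)^(p-1) * 1)) x := by
      have h4 := (hd_pow_add1 (p-1) hp1' x).mul (hasDerivAt_id' (x := x))
      rw [show p-1-1 = p-2 by ring] at h4
      exact h4.const_mul p
    have h := (h1.add h2).sub h3
    exact h.congr_deriv (by ring)
  -- key value F c
  have hFc : F c = p^(p-2) * (p-1)^(1-p) := by
    have hc1 : c + 1 = p * (p-1)⁻¹ := by rw [hcdef]; field_simp; ring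
    have e1 : c^p = ((p-1)^p)⁻¹ := by rw [hcdef, ← Real.inv_rpow (le_of_lt hr0)]
    have e2 : (c+1)^p = p^p * ((p-1)^p)⁻¹ := by
      rw [hc1, Real.mul_rpow (by linarith) (by positivity), Real.inv_rpow (le_of_lt hr0)]
    have e3 : (c+1)^(p-1) = p^(p-1) * ((p-1)^(p-1))⁻¹ := by
      rw [hc1, Real.mul_rpow (by linarith) (by positivity), Real.inv_rpow (le_of_lt hr0)]
    have epp : p^p = p^(p-1) * p := by
      rw [← Real.rpow_add_one (by positivity) (p-1)]; ring_nf
    have epp1 : p^(p-1) = p^(p-2) * p := by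
      rw [← Real.rpow_add_one (by positivity) (p-2)]; ring_nf
    have err : (p-1)^p = (p-1)^(p-1) * (p-1) := by
      rw [← Real.rpow_add_one (by positivity) (p-1)]; ring_nf
    have err2 : (p-1)^(1-p) = (p-1) * ((p-1)^p)⁻¹ := by
      rw [show (1:ℝ)-p = 1 + (-p) by ring, Real.rpow_add hr0, Real.rpow_one,
        Real.rpow_neg (le_of_lt hr0)]
    have hY : (0:ℝ) < (p-1)^(p-1) := Real.rpow_pos_of_pos hr0 _
    have hrne : p - 1 ≠ 0 := ne_of_gt hr0
    have hYne : (p-1)^(p-1) ≠ 0 := ne_of_gt hY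
    have hpne : p ≠ 0 := by positivity
    simp only [hFdef]
    rw [e1, e2, e3, err2, err, epp, epp1, hcdef]
    field_simp
    ring
  -- monotone on [c, ∞)
  have mono : MonotoneOn F (Ici c) := by
    apply monotoneOn_of_deriv_nonneg (convex_Ici c)
    · exact (continuous_iff_continuousAt.2 fun x => (hdF x).continuousAt).continuousOn
    · exact fun x _ => (hdF x).differentiableAt.differentiableWithinAt
    · intro x hx
      rw [interior_Ici] at hx
      have hxc : c < x := hx
      have hx0 : 0 < x := lt_trans hc0 hxc
      rw [(hdF x).deriv]
      have hpx : x + 1 < p * x := by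
        have : 1 < (p-1) * x := by
          rw [hcdef] at hxc
          calc (1:ℝ) = (p-1) * (p-1)⁻¹ := by field_simp
            _ < (p-1)*x := by exact mul_lt_mul_of_pos_left hxc hr0
        nlinarith
      have key : (x+1)^(p-2) ≤ (p*x)^(p-2) :=
        Real.rpow_le_rpow (by linarith) (le_of_lt hpx) (by linarith)
      have e1 : (p*x)^(p-2) = p^(p-2) * x^(p-2) := Real.mul_rpow (by linarith) (by linarith)
      have e2 : x^(p-1) = x^(p-2) * x := by
        rw [← Real.rpow_add_one (by positivity) (p-2)]; ring_nf
      rw [e1] at key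
      apply mul_nonneg (by nlinarith)
      rw [e2]
      nlinarith
  -- antitone on [0, c]
  have anti : AntitoneOn F (Icc 0 c) := by
    apply antitoneOn_of_deriv_nonpos (convex_Icc 0 c)
    · exact (continuous_iff_continuousAt.2 fun x => (hdF x).continuousAt).continuousOn
    · exact fun x hx => (hdF x).differentiableAt.differentiableWithinAt
    · intro x hx
      rw [interior_Icc] at hx
      obtain ⟨hx0, hxc⟩ := hx
      rw [(hdF x).deriv]
      have hpx : p * x < x + 1 := by
        have : (p-1) * x < 1 := by
          rw [hcdef] at hxc
          calc (p-1)*x < (p-1)*(p-1)⁻¹ := mul_lt_mul_of_pos_left hxc hr0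
            _ = 1 := by field_simp
        nlinarith
      have key : (p*x)^(p-2) ≤ (x+1)^(p-2) :=
        Real.rpow_le_rpow (by positivity) (le_of_lt hpx) (by linarith)
      have e1 : (p*x)^(p-2) = p^(p-2) * x^(p-2) := Real.mul_rpow (by linarith) (by linarith)
      have e2 : x^(p-1) = x^(p-2) * x := by
        rw [← Real.rpow_add_one (by positivity) (p-2)]; ring_nf
      rw [e1] at key
      have hxp : (0:ℝ) < x^(p-2) := Real.rpow_pos_of_pos hx0 _
      have hD : p^(p-2)*x^(p-1) - x*(x+1)^(p-2) ≤ 0 := by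
        rw [e2]; nlinarith
      have := mul_le_mul_of_nonneg_left hD (show (0:ℝ) ≤ p*(p-1) by nlinarith)
      simpa using this
  have main : F c ≤ F t := by
    rcases le_total t c with h | h
    · exact anti (by constructor <;> [exact ht; exact h]) (by constructor <;> [exact le_of_lt hc0; exact le_refl c]) h
    · exact mono (self_mem_Ici) h h
  rw [hFc] at main
  calc p^(p-2)*(p-1)^(1-p) ≤ F t := main
    _ = (p-1)*p^(p-2)*t^p + (t+1)^p - p*(t+1)^(p-1)*t := by rw [hFdef]; ring

lemma caseB (p : ℝ) (hp2 : 2 < p) (u : ℝ) (hu0 : 0 ≤ u) (hu1 : u ≤ 1) :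
    p^(p-2) * (p-1)^(1-p) ≤ (p-1)*p^(p-2)*u^p + (1-u)^p + p*(1-u)^(p-1)*u := by
  have hp1 : (1:ℝ) ≤ p := by linarith
  have hp1' : (1:ℝ) ≤ p - 1 := by linarith
  have hr0 : (0:ℝ) < p - 1 := by linarith
  have hq0 : (0:ℝ) < p + 1 := by linarith
  set c : ℝ := (p+1)⁻¹ with hcdef
  have hc0 : 0 < c := by positivity
  have hc1 : c < 1 := by
    rw [hcdef, inv_lt_one_iff₀]; right; linarith
  set G : ℝ → ℝ := fun s => (p-1)*p^(p-2)*s^p + (1-s)^p + p*((1-s)^(p-1)*s) with hGdef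
  have hdG : ∀ x : ℝ, HasDerivAt G (p*(p-1)*(p^(p-2)*x^(p-1) - x*(1-x)^(p-2))) x := by
    intro x
    have h1 : HasDerivAt (fun s : ℝ => (p-1)*p^(p-2)*s^p) ((p-1)*p^(p-2)*(p*x^(p-1))) x :=
      (hd_pow p hp1 x).const_mul _
    have h2 := hd_pow_one_sub p hp1 x
    have h3 : HasDerivAt (fun s : ℝ => p*((1-s)^(p-1)*s))
        (p*(-((p-1) * (1-x)^(p-2)) * x + (1-x)^(p-1) * 1)) x := by
      have h4 := (hd_pow_one_sub (p-1) hp1' x).mul (hasDerivAt_id' (x := x))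
      rw [show p-1-1 = p-2 by ring] at h4
      exact h4.const_mul p
    have h := (h1.add h2).add h3
    exact h.congr_deriv (by ring)
  -- value at c
  have hGc : p^(p-2) * (p-1)^(1-p) ≤ G c := by
    have h1c : 1 - c = p * (p+1)⁻¹ := by rw [hcdef]; field_simp; ring
    have e1 : c^p = ((p+1)^p)⁻¹ := by rw [hcdef, ← Real.inv_rpow (le_of_lt hq0)]
    have e2 : (1-c)^p = p^p * ((p+1)^p)⁻¹ := by
      rw [h1c, Real.mul_rpow (by linarith) (by positivity), Real.inv_rpow (le_of_lt hq0)]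
    have e3 : (1-c)^(p-1) = p^(p-1) * ((p+1)^(p-1))⁻¹ := by
      rw [h1c, Real.mul_rpow (by linarith) (by positivity), Real.inv_rpow (le_of_lt hq0)]
    have epp : p^p = p^(p-1) * p := by
      rw [← Real.rpow_add_one (by positivity : p ≠ 0) (p-1)]; ring_nf
    have epp1 : p^(p-1) = p^(p-2) * p := by
      rw [← Real.rpow_add_one (by positivity : p ≠ 0) (p-2)]; ring_nf
    have eqq : (p+1)^p = (p+1)^(p-1) * (p+1) := by
      rw [← Real.rpow_add_one (by positivity : p+1 ≠ 0) (p-1)]; ring_nf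
    have err : (p-1)^p = (p-1)^(p-1) * (p-1) := by
      rw [← Real.rpow_add_one (ne_of_gt hr0) (p-1)]; ring_nf
    have err2 : (p-1)^(1-p) = (p-1) * ((p-1)^p)⁻¹ := by
      rw [show (1:ℝ)-p = 1 + (-p) by ring, Real.rpow_add hr0, Real.rpow_one,
        Real.rpow_neg (le_of_lt hr0)]
    have hX : (0:ℝ) < (p+1)^(p-1) := Real.rpow_pos_of_pos hq0 _
    have hY : (0:ℝ) < (p-1)^(p-1) := Real.rpow_pos_of_pos hr0 _
    have hA : (0:ℝ) < p^(p-2) := Real.rpow_pos_of_pos (by linarith) _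
    have hXY : (p+1)^(p-1) ≤ (2*p-1) * (p-1)^(p-1) := by
      have := aux_pow (p-1) hp1'
      rw [show p-1+2 = p+1 by ring, show 2*(p-1)+1 = 2*p-1 by ring] at this
      exact this
    simp only [hGdef]
    rw [e1, e2, e3, err2, err, epp, epp1, eqq, hcdef]
    have hL : p^(p-2)*((p-1)*((p-1)^(p-1)*(p-1))⁻¹) = p^(p-2)/(p-1)^(p-1) := by
      field_simp
    have hR : (p-1)*p^(p-2)*((p+1)^(p-1)*(p+1))⁻¹ + p^(p-2)*p*p*((p+1)^(p-1)*(p+1))⁻¹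
        + p*(p^(p-2)*p*((p+1)^(p-1))⁻¹*(p+1)⁻¹) = p^(p-2)*(2*p-1)/(p+1)^(p-1) := by
      field_simp
      ring
    rw [hL, hR, div_le_div_iff₀ hY hX]
    nlinarith [mul_le_mul_of_nonneg_left hXY (le_of_lt hA)]
  -- monotone on [c,1]
  have mono : MonotoneOn G (Icc c 1) := by
    apply monotoneOn_of_deriv_nonneg (convex_Icc c 1)
    · exact (continuous_iff_continuousAt.2 fun x => (hdG x).continuousAt).continuousOn
    · exact fun x _ => (hdG x).differentiableAt.differentiableWithinAt
    · intro x hx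
      rw [interior_Icc] at hx
      obtain ⟨hxc, hx1⟩ := hx
      have hx0 : 0 < x := lt_trans hc0 hxc
      rw [(hdG x).deriv]
      have hpx : 1 - x < p * x := by
        have : 1 < (p+1) * x := by
          rw [hcdef] at hxc
          calc (1:ℝ) = (p+1) * (p+1)⁻¹ := by field_simp
            _ < (p+1)*x := mul_lt_mul_of_pos_left hxc hq0
        nlinarith
      have key : (1-x)^(p-2) ≤ (p*x)^(p-2) :=
        Real.rpow_le_rpow (by linarith) (le_of_lt hpx) (by linarith)
      have e1 : (p*x)^(p-2) = p^(p-2) * x^(p-2) := Real.mul_rpow (by linarith) (by linarith)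
      have e2 : x^(p-1) = x^(p-2) * x := by
        rw [← Real.rpow_add_one (by positivity) (p-2)]; ring_nf
      rw [e1] at key
      apply mul_nonneg (by nlinarith)
      rw [e2]
      nlinarith
  -- antitone on [0,c]
  have anti : AntitoneOn G (Icc 0 c) := by
    apply antitoneOn_of_deriv_nonpos (convex_Icc 0 c)
    · exact (continuous_iff_continuousAt.2 fun x => (hdG x).continuousAt).continuousOn
    · exact fun x _ => (hdG x).differentiableAt.differentiableWithinAt
    · intro x hx
      rw [interior_Icc] at hx
      obtain ⟨hx0, hxc⟩ := hx
      rw [(hdG x).deriv]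
      have hpx : p * x < 1 - x := by
        have : (p+1) * x < 1 := by
          rw [hcdef] at hxc
          calc (p+1)*x < (p+1)*(p+1)⁻¹ := mul_lt_mul_of_pos_left hxc hq0
            _ = 1 := by field_simp
        nlinarith
      have key : (p*x)^(p-2) ≤ (1-x)^(p-2) :=
        Real.rpow_le_rpow (by positivity) (le_of_lt hpx) (by linarith)
      have e1 : (p*x)^(p-2) = p^(p-2) * x^(p-2) := Real.mul_rpow (by linarith) (by linarith)
      have e2 : x^(p-1) = x^(p-2) * x := by
        rw [← Real.rpow_add_one (by positivity) (p-2)]; ring_nf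
      rw [e1] at key
      have hxp : (0:ℝ) < x^(p-2) := Real.rpow_pos_of_pos hx0 _
      have hD : p^(p-2)*x^(p-1) - x*(1-x)^(p-2) ≤ 0 := by
        rw [e2]; nlinarith
      have := mul_le_mul_of_nonneg_left hD (show (0:ℝ) ≤ p*(p-1) by nlinarith)
      simpa using this
  have main : G c ≤ G u := by
    rcases le_total u c with h | h
    · exact anti ⟨hu0, h⟩ ⟨le_of_lt hc0, le_refl c⟩ h
    · exact mono ⟨le_refl c, le_of_lt hc1⟩ ⟨h, hu1⟩ h
  calc p^(p-2)*(p-1)^(1-p) ≤ G c := hGc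
    _ ≤ G u := main
    _ = (p-1)*p^(p-2)*u^p + (1-u)^p + p*(1-u)^(p-1)*u := by rw [hGdef]; ring

lemma caseC (p : ℝ) (hp2 : 2 < p) (u : ℝ) (hu : 1 ≤ u) :
    p^(p-2) * (p-1)^(1-p) ≤ (p-1)*p^(p-2)*u^p + (u-1)^p - p*(u-1)^(p-1)*u := by
  have hp1 : (1:ℝ) ≤ p := by linarith
  have hp1' : (1:ℝ) ≤ p - 1 := by linarith
  set H : ℝ → ℝ := fun s => (p-1)*p^(p-2)*s^p + (s-1)^p - p*((s-1)^(p-1)*s) with hHdef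
  have hdH : ∀ x : ℝ, HasDerivAt H (p*(p-1)*(p^(p-2)*x^(p-1) - x*(x-1)^(p-2))) x := by
    intro x
    have h1 : HasDerivAt (fun s : ℝ => (p-1)*p^(p-2)*s^p) ((p-1)*p^(p-2)*(p*x^(p-1))) x :=
      (hd_pow p hp1 x).const_mul _
    have h2 := hd_pow_sub1 p hp1 x
    have h3 : HasDerivAt (fun s : ℝ => p*((s-1)^(p-1)*s))
        (p*((p-1) * (x-1)^(p-2) * x + (x-1)^(p-1) * 1)) x := by
      have h4 := (hd_pow_sub1 (p-1) hp1' x).mul (hasDerivAt_id' (x := x))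
      rw [show p-1-1 = p-2 by ring] at h4
      exact h4.const_mul p
    have h := (h1.add h2).sub h3
    exact h.congr_deriv (by ring)
  have mono : MonotoneOn H (Ici 1) := by
    apply monotoneOn_of_deriv_nonneg (convex_Ici 1)
    · exact (continuous_iff_continuousAt.2 fun x => (hdH x).continuousAt).continuousOn
    · exact fun x _ => (hdH x).differentiableAt.differentiableWithinAt
    · intro x hx
      rw [interior_Ici] at hx
      have hx1 : (1:ℝ) < x := hx
      rw [(hdH x).deriv]
      have key : (x-1)^(p-2) ≤ (p*x)^(p-2) :=
        Real.rpow_le_rpow (by linarith) (by nlinarith) (by linarith)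
      have e1 : (p*x)^(p-2) = p^(p-2) * x^(p-2) := Real.mul_rpow (by linarith) (by linarith)
      have e2 : x^(p-1) = x^(p-2) * x := by
        rw [← Real.rpow_add_one (by positivity) (p-2)]; ring_nf
      rw [e1] at key
      have hxp : (0:ℝ) < x^(p-2) := Real.rpow_pos_of_pos (by linarith) _
      apply mul_nonneg (by nlinarith)
      rw [e2]
      nlinarith
  have hH1 : H 1 = (p-1)*p^(p-2) := by
    simp only [hHdef]
    rw [show (1:ℝ)-1 = 0 by ring, Real.zero_rpow (by linarith : p ≠ 0),
      Real.zero_rpow (by intro h; linarith [h] : p-1 ≠ 0), Real.one_rpow]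
    ring
  have step := mono self_mem_Ici hu hu
  rw [hH1] at step
  have base : p^(p-2) * (p-1)^(1-p) ≤ (p-1)*p^(p-2) := by
    have h1 : (p-1)^(1-p) ≤ (p-1)^(1:ℝ) :=
      Real.rpow_le_rpow_of_exponent_le (by linarith) (by linarith)
    rw [Real.rpow_one] at h1
    have hA : (0:ℝ) < p^(p-2) := Real.rpow_pos_of_pos (by linarith) _
    nlinarith
  calc p^(p-2) * (p-1)^(1-p) ≤ (p-1)*p^(p-2) := base
    _ ≤ H u := step
    _ = (p-1)*p^(p-2)*u^p + (u-1)^p - p*(u-1)^(p-1)*u := by rw [hHdef]; ring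


/-- Lemma 1: for `p = 2i/(2j+1) > 2` (even numerator, odd denominator) and all real `t`,
`(p-1) p^{p-2} t^p + (t+1)^p - p (t+1)^{p-1} t ≥ p^{p-2} (p-1)^{1-p}`, where the real power
`t ^ p` is interpreted as `|t| ^ p` and `t ^ (p-1)` as `sgn t * |t| ^ (p-1)`. -/
theorem stmt0 (p : ℝ) (i j : ℕ) (hi : 0 < i) (hj : 0 < j)
    (hp : p = 2 * (i : ℝ) / (2 * (j : ℝ) + 1)) (hp2 : 2 < p) (t : ℝ) :
    (p - 1) * p ^ (p - 2) * |t| ^ p + |t + 1| ^ p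
      - p * Real.sign (t + 1) * |t + 1| ^ (p - 1) * t
      ≥ p ^ (p - 2) * (p - 1) ^ (1 - p) := by
  rw [ge_iff_le]
  rcases le_or_gt 0 t with ht | ht
  · -- t ≥ 0
    rw [Real.sign_of_pos (by linarith : (0:ℝ) < t + 1), abs_of_nonneg ht,
      abs_of_nonneg (by linarith : (0:ℝ) ≤ t + 1)]
    have h := caseA p hp2 t ht
    convert h using 1
    ring
  · rcases le_or_gt t (-1) with ht1 | ht1
    · -- t ≤ -1
      have hu : 1 ≤ -t := by linarith
      have h := caseC p hp2 (-t) hu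
      rw [abs_of_neg ht, abs_of_nonpos (by linarith : t + 1 ≤ 0)]
      have hsgn : p * Real.sign (t + 1) * (-(t+1)) ^ (p - 1) * t
          = p * (-t - 1) ^ (p-1) * (-t) := by
        rcases eq_or_lt_of_le ht1 with he | hlt
        · subst he
          have h0 : ((0:ℝ)) ^ (p-1) = 0 := Real.zero_rpow (by intro hh; linarith)
          norm_num [h0]
        · rw [Real.sign_of_neg (by linarith : t + 1 < 0)]
          rw [show -(t+1) = -t-1 by ring]
          ring
      rw [hsgn, show -(t+1) = -t-1 by ring]
      exact h
    · -- -1 < t < 0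
      have hu0 : 0 ≤ -t := by linarith
      have hu1 : -t ≤ 1 := by linarith
      have h := caseB p hp2 (-t) hu0 hu1
      rw [Real.sign_of_pos (by linarith : (0:ℝ) < t + 1), abs_of_neg ht,
        abs_of_nonneg (by linarith : (0:ℝ) ≤ t + 1)]
      rw [show (1 : ℝ) - -t = t + 1 by ring] at h
      convert h using 1
      ring
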